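/- Both roots of the complex quadratic s² + (φ + iξ)s + (α + iβ) = 0, where α, β, φ, ξ are real, have strictly negative real part if and only if φ > 0 and αφ² + βξφ − β² > 0. -/
import Mathlib

open Complex

lemma real_iff (x₁ x₂ y₁ y₂ : ℝ) :
    (0 < x₁ ∧ 0 < x₂) ↔
      (0 < x₁ + x₂ ∧
        0 < (x₁*x₂ - y₁*y₂) * (x₁+x₂)^2 +
          (-(x₁*y₂+x₂*y₁)) * (-(y₁+y₂)) * (x₁+x₂) - (-(x₁*y₂+x₂*y₁))^2) := by
  have hid : (x₁*x₂ - y₁*y₂) * (x₁+x₂)^2 +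
      (-(x₁*y₂+x₂*y₁)) * (-(y₁+y₂)) * (x₁+x₂) - (-(x₁*y₂+x₂*y₁))^2
      = x₁*x₂ * ((x₁+x₂)^2 + (y₁-y₂)^2) := by ring
  rw [hid]
  constructor
  · rintro ⟨h1, h2⟩
    refine ⟨by linarith, ?_⟩
    have : 0 < (x₁+x₂)^2 + (y₁-y₂)^2 := by positivity
    have : 0 < x₁ * x₂ := mul_pos h1 h2
    positivity
  · rintro ⟨h1, h2⟩
    have hP : 0 < x₁ * x₂ := by nlinarith [sq_nonneg (y₁ - y₂), sq_nonneg (x₁+x₂)]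
    constructor <;> nlinarith

theorem stmt2 (α β φ ξ : ℝ) :
    (∀ s : ℂ, s ^ 2 + (φ + ξ * Complex.I) * s + (α + β * Complex.I) = 0 → s.re < 0) ↔
      (0 < φ ∧ 0 < α * φ ^ 2 + β * ξ * φ - β ^ 2) := by
  set b : ℂ := (φ : ℂ) + ξ * Complex.I with hb
  set c : ℂ := (α : ℂ) + β * Complex.I with hc
  obtain ⟨d, hd⟩ := IsAlgClosed.exists_pow_nat_eq (k := ℂ) (b ^ 2 - 4 * c) (n := 2) zero_lt_two
  set s₁ : ℂ := (-b + d) / 2 with hs1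
  set s₂ : ℂ := (-b - d) / 2 with hs2
  have hfac : ∀ s : ℂ, s ^ 2 + b * s + c = (s - s₁) * (s - s₂) := by
    intro s
    rw [hs1, hs2]
    linear_combination (1/4 : ℂ) * hd
  have hsum : s₁ + s₂ = -b := by rw [hs1, hs2]; ring
  have hprod : s₁ * s₂ = c := by
    have := hfac 0
    simpa using this.symm
  -- extract real relations
  set x₁ : ℝ := -s₁.re
  set x₂ : ℝ := -s₂.re
  set y₁ : ℝ := s₁.im
  set y₂ : ℝ := s₂.im
  have hφ : φ = x₁ + x₂ := by
    have := congrArg Complex.re hsum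
    simp [hb, Complex.add_re, x₁, x₂] at this ⊢
    linarith
  have hξ : ξ = -(y₁ + y₂) := by
    have := congrArg Complex.im hsum
    simp [hb, Complex.add_im, y₁, y₂] at this ⊢
    linarith
  have hα : α = x₁ * x₂ - y₁ * y₂ := by
    have := congrArg Complex.re hprod
    simp [hc, Complex.mul_re, x₁, x₂, y₁, y₂] at this ⊢
    linarith [this]
  have hβ : β = -(x₁ * y₂ + x₂ * y₁) := by
    have := congrArg Complex.im hprod
    simp [hc, Complex.mul_im, x₁, x₂, y₁, y₂] at this ⊢
    linarith [this]
  have hroots : (∀ s : ℂ, s ^ 2 + b * s + c = 0 → s.re < 0) ↔ (0 < x₁ ∧ 0 < x₂) := by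
    constructor
    · intro h
      constructor
      · have := h s₁ (by rw [hfac]; ring)
        simp only [x₁]; linarith
      · have := h s₂ (by rw [hfac]; ring)
        simp only [x₂]; linarith
    · rintro ⟨h1, h2⟩ s hs
      rw [hfac] at hs
      rcases mul_eq_zero.mp hs with h | h
      · have : s = s₁ := by linear_combination h
        rw [this]; simp only [x₁] at h1; linarith
      · have : s = s₂ := by linear_combination h
        rw [this]; simp only [x₂] at h2; linarith
  rw [hroots, hφ, hξ, hα, hβ]
  exact real_iff x₁ x₂ y₁ y₂
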